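/- In the shifted cube grid, every closed ball of radius r < 1/6 intersects at most four tiles: for every p ∈ ℝ³ and every r with 0 ≤ r < 1/6, the number of triples (i, j, k) ∈ ℤ³ such that T(i, j, k) intersects closedBall(p, r) is at most four. -/

import Mathlib

open Metric Set

/-- The tile `T(i, j, k) = [i + k/3, i + k/3 + 1) × [j + (k−i)/3, j + (k−i)/3 + 1) × [k, k+1)`
of the shifted cube grid: each horizontal layer is shifted by 1/3 of a cube's width in the
x- and y-directions relative to the layer below it, and within each layer each column is
shifted by 1/3 in the y-direction relative to the column to its left. -/
def shiftedCube (i j k : ℤ) : Set (EuclideanSpace ℝ (Fin 3)) :=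
  {x | x 0 ∈ Ico ((i : ℝ) + (k : ℝ) / 3) ((i : ℝ) + (k : ℝ) / 3 + 1) ∧
       x 1 ∈ Ico ((j : ℝ) + ((k : ℝ) - (i : ℝ)) / 3) ((j : ℝ) + ((k : ℝ) - (i : ℝ)) / 3 + 1) ∧
       x 2 ∈ Ico (k : ℝ) ((k : ℝ) + 1)}

lemma scg_coord_dist (x y : EuclideanSpace ℝ (Fin 3)) (m : Fin 3) : |x m - y m| ≤ dist x y := by
  rw [EuclideanSpace.dist_eq, ← Real.dist_eq]
  refine (Real.le_sqrt dist_nonneg ?_).mpr ?_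
  · positivity
  · exact Finset.single_le_sum (f := fun i => dist (x i) (y i) ^ 2)
      (fun i _ => sq_nonneg _) (Finset.mem_univ m)

lemma scg_windowCard (u v : ℤ) :
    ((Finset.Icc (0:ℤ) 3 ×ˢ Finset.Icc (0:ℤ) 3).filter
      (fun q => ((u + 1 - q.1) % 3 = 0 ∧ (v + 4 - q.1 - 3*q.2) % 9 = 0) ∨
                ((u - q.1) % 3 = 0 ∧ (v - q.1 - 3*q.2) % 9 = 0))).card ≤ 4 := by
  have h1 : ∀ α : ℤ, (u + 1 - α) % 3 = (u % 3 + 1 - α) % 3 := by omega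
  have h2 : ∀ α : ℤ, (u - α) % 3 = (u % 3 - α) % 3 := by omega
  have h3 : ∀ α β : ℤ, (v + 4 - α - 3*β) % 9 = (v % 9 + 4 - α - 3*β) % 9 := by omega
  have h4 : ∀ α β : ℤ, (v - α - 3*β) % 9 = (v % 9 - α - 3*β) % 9 := by omega
  rw [Finset.filter_congr (fun q _ => by rw [h1 q.1, h2 q.1, h3 q.1 q.2, h4 q.1 q.2])]
  have hu : 0 ≤ u % 3 ∧ u % 3 < 3 :=
    ⟨Int.emod_nonneg u (by norm_num), Int.emod_lt_of_pos u (by norm_num)⟩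
  have hv : 0 ≤ v % 9 ∧ v % 9 < 9 :=
    ⟨Int.emod_nonneg v (by norm_num), Int.emod_lt_of_pos v (by norm_num)⟩
  set a := u % 3 with ha
  set b := v % 9 with hb
  clear_value a b
  obtain ⟨ha0, ha1⟩ := hu
  obtain ⟨hb0, hb1⟩ := hv
  interval_cases a <;> interval_cases b <;> decide

lemma scg_windowCard' (A B K : ℤ) :
    ((Finset.Icc (A-3) A ×ˢ Finset.Icc (B-3) B).filter
      (fun q => ((q.1 - (K-1)) % 3 = 0 ∧ (3*q.2 + q.1 - 4*(K-1)) % 9 = 0) ∨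
                ((q.1 - K) % 3 = 0 ∧ (3*q.2 + q.1 - 4*K) % 9 = 0))).card ≤ 4 := by
  refine le_trans (Finset.card_le_card_of_injOn (fun q => (A - q.1, B - q.2)) ?_ ?_)
    (scg_windowCard (A - K) (3*B + A - 4*K))
  · rintro ⟨a, b⟩ hq
    simp only [Finset.mem_coe, Finset.mem_filter, Finset.mem_product, Finset.mem_Icc] at hq ⊢
    obtain ⟨⟨⟨h1, h2⟩, h3, h4⟩, h5⟩ := hq
    refine ⟨⟨⟨by omega, by omega⟩, by omega, by omega⟩, ?_⟩
    rcases h5 with ⟨c1, c2⟩ | ⟨c1, c2⟩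
    · left; constructor <;> omega
    · right; constructor <;> omega
  · rintro ⟨a, b⟩ _ ⟨a', b'⟩ _ h
    simp only [Prod.mk.injEq] at h ⊢
    omega

/-- Every closed ball of radius `r < 1/6` intersects at most four tiles of the shifted
cube grid. -/
theorem shifted_cube_grid_ball_meets_at_most_four_tiles
    (p : EuclideanSpace ℝ (Fin 3)) (r : ℝ) (hr0 : 0 ≤ r) (hr : r < 1 / 6) :
    {q : ℤ × ℤ × ℤ | (shiftedCube q.1 q.2.1 q.2.2 ∩ closedBall p r).Nonempty}.encard ≤ 4 := by
  set K : ℤ := ⌊p 2 + r⌋ with hK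
  set A : ℤ := ⌊3 * (p 0 + r)⌋ with hA
  set B : ℤ := ⌊3 * (p 1 + r)⌋ with hB
  set H : Set (ℤ × ℤ × ℤ) :=
    {q : ℤ × ℤ × ℤ | (shiftedCube q.1 q.2.1 q.2.2 ∩ closedBall p r).Nonempty} with hH
  set F : Finset (ℤ × ℤ) := (Finset.Icc (A-3) A ×ˢ Finset.Icc (B-3) B).filter
      (fun q => ((q.1 - (K-1)) % 3 = 0 ∧ (3*q.2 + q.1 - 4*(K-1)) % 9 = 0) ∨
                ((q.1 - K) % 3 = 0 ∧ (3*q.2 + q.1 - 4*K) % 9 = 0)) with hF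
  set φ : ℤ × ℤ × ℤ → ℤ × ℤ := fun q => (3*q.1 + q.2.2, 3*q.2.1 + q.2.2 - q.1) with hφ
  -- basic bounds for any hit tile
  have key : ∀ i j k : ℤ, (i, j, k) ∈ H → (K - 1 ≤ k ∧ k ≤ K) ∧
      (A - 3 ≤ 3*i + k ∧ 3*i + k ≤ A) ∧
      (B - 3 ≤ 3*j + k - i ∧ 3*j + k - i ≤ B) := by
    rintro i j k hq
    obtain ⟨x, hx, hxb⟩ := hq
    obtain ⟨⟨hx0l, hx0r⟩, ⟨hx1l, hx1r⟩, ⟨hx2l, hx2r⟩⟩ := hx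
    rw [mem_closedBall] at hxb
    have d0 : |x 0 - p 0| ≤ r := le_trans (scg_coord_dist x p 0) hxb
    have d1 : |x 1 - p 1| ≤ r := le_trans (scg_coord_dist x p 1) hxb
    have d2 : |x 2 - p 2| ≤ r := le_trans (scg_coord_dist x p 2) hxb
    rw [abs_sub_le_iff] at d0 d1 d2
    have hKle : (K : ℝ) ≤ p 2 + r := Int.floor_le _
    have hKgt : p 2 + r < K + 1 := Int.lt_floor_add_one _
    have hAle : (A : ℝ) ≤ 3 * (p 0 + r) := Int.floor_le _
    have hBle : (B : ℝ) ≤ 3 * (p 1 + r) := Int.floor_le _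
    refine ⟨⟨?_, ?_⟩, ⟨?_, ?_⟩, ⟨?_, ?_⟩⟩
    · -- K - 1 ≤ k
      have h1 : (K : ℝ) < k + 2 := by linarith
      have h2 : K < k + 2 := by exact_mod_cast h1
      omega
    · -- k ≤ K
      have : (k : ℝ) ≤ p 2 + r := by linarith
      exact Int.le_floor.mpr this
    · -- A - 3 ≤ 3i + k
      have : (A : ℝ) < (3*i + k) + 4 := by push_cast; linarith
      have h' : A < (3*i + k) + 4 := by exact_mod_cast this
      omega
    · -- 3i + k ≤ A
      have : ((3*i + k : ℤ) : ℝ) ≤ 3 * (p 0 + r) := by push_cast; linarith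
      exact Int.le_floor.mpr this
    · have : (B : ℝ) < (3*j + k - i) + 4 := by push_cast; linarith
      have h' : B < (3*j + k - i) + 4 := by exact_mod_cast this
      omega
    · have : ((3*j + k - i : ℤ) : ℝ) ≤ 3 * (p 1 + r) := by push_cast; linarith
      exact Int.le_floor.mpr this
  have hmaps : ∀ q ∈ H, φ q ∈ F := by
    rintro ⟨i, j, k⟩ hq
    obtain ⟨⟨hk1, hk2⟩, ⟨ha1, ha2⟩, ⟨hb1, hb2⟩⟩ := key i j k hq
    simp only [hF, Finset.mem_filter, Finset.mem_product, Finset.mem_Icc, hφ]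
    refine ⟨⟨⟨ha1, ha2⟩, hb1, hb2⟩, ?_⟩
    rcases (by omega : k = K - 1 ∨ k = K) with h | h
    · left; constructor <;> omega
    · right; constructor <;> omega
  have hinj : InjOn φ H := by
    rintro ⟨i, j, k⟩ hq ⟨i', j', k'⟩ hq' heq
    obtain ⟨⟨hk1, hk2⟩, -⟩ := key i j k hq
    obtain ⟨⟨hk1', hk2'⟩, -⟩ := key i' j' k' hq'
    simp only [hφ, Prod.mk.injEq] at heq ⊢
    omega
  calc H.encard = (φ '' H).encard := (hinj.encard_image).symm
    _ ≤ (↑F : Set (ℤ × ℤ)).encard :=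
        encard_le_encard (by rintro _ ⟨q, hq, rfl⟩; exact hmaps q hq)
    _ = F.card := encard_coe_eq_coe_finsetCard F
    _ ≤ 4 := by exact_mod_cast scg_windowCard' A B K
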